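/- arXiv:math/0109056 — 3 statements merged into one kernel-verified Lean document; each statement's English description precedes it below -/
import Mathlib

section
/- Let Z(x,t) = x(1+it²) and for each positive integer k let g_k(x,t) = Z(x,t)² − 1/k². Then |g_k(x,t)|² = (1 + 2t⁴ + t⁸)x⁴ + ((2t⁴ − 2)/k²)x² + 1/k⁴, and for any 0 < δ ≤ M there exists a constant C(M,δ) > 0, independent of k, such that |g_k(x,t)| ≥ C(M,δ)/k² whenever δ ≤ |t| ≤ M and x ∈ ℝ. -/
open Complex

/-- `Z(x,t) = x(1+it²)` -/
noncomputable def Zfi (x t : ℝ) : ℂ := (x : ℂ) * (1 + Complex.I * (t : ℂ) ^ 2)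

/-- `g_k(x,t) = Z(x,t)² − 1/k²` -/
noncomputable def gfk (k : ℕ) (x t : ℝ) : ℂ := (Zfi x t) ^ 2 - 1 / (k : ℂ) ^ 2

lemma gfk_abs_sq (k : ℕ) (hk : 0 < k) (x t : ℝ) :
    (‖gfk k x t‖) ^ 2 =
        (1 + 2 * t ^ 4 + t ^ 8) * x ^ 4 + ((2 * t ^ 4 - 2) / (k : ℝ) ^ 2) * x ^ 2
          + 1 / (k : ℝ) ^ 4 := by
  have hk' : (k : ℝ) ≠ 0 := Nat.cast_ne_zero.2 hk.ne'
  have h : gfk k x t = Complex.ofReal (x^2*(1-t^4) - 1/(k:ℝ)^2)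
      + Complex.I * Complex.ofReal (2*x^2*t^2) := by
    simp only [gfk, Zfi]
    push_cast
    ring_nf
    simp [Complex.I_sq]
    ring
  rw [h, Complex.sq_norm, Complex.normSq_apply]
  simp only [Complex.add_re, Complex.add_im, Complex.mul_re, Complex.mul_im,
    Complex.ofReal_re, Complex.ofReal_im, Complex.I_re, Complex.I_im]
  field_simp
  ring

lemma gfk_lower_sq (M δ : ℝ) (hδ : 0 < δ) (hM : δ ≤ M) (k : ℕ) (hk : 0 < k) (x t : ℝ)
    (h1 : δ ≤ |t|) (h2 : |t| ≤ M) :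
    ((2*δ^2/(1+M^4)) / (k:ℝ)^2)^2 ≤
      (1 + 2 * t ^ 4 + t ^ 8) * x ^ 4 + ((2 * t ^ 4 - 2) / (k : ℝ) ^ 2) * x ^ 2
          + 1 / (k : ℝ) ^ 4 := by
  have hk' : (0:ℝ) < (k : ℝ) := Nat.cast_pos.2 hk
  have hδt : δ^2 ≤ t^2 := by nlinarith [abs_nonneg t, _root_.sq_abs t]
  have h0 : t^2 ≤ M^2 := by nlinarith [abs_nonneg t, _root_.sq_abs t]
  have htM : t^4 ≤ M^4 := by nlinarith [sq_nonneg t, sq_nonneg M]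
  have hM4 : (0:ℝ) < 1 + M^4 := by nlinarith [hδ.trans_le hM]
  have ht4 : (0:ℝ) < 1 + t^4 := by positivity
  have step2 : ((2*δ^2/(1+M^4)) / (k:ℝ)^2)^2 ≤ (2*t^2/((1+t^4)*(k:ℝ)^2))^2 := by
    rw [div_div] at *
    apply pow_le_pow_left₀ (by positivity)
    apply div_le_div₀ (by positivity) (by nlinarith) (by positivity) (by nlinarith [mul_le_mul_of_nonneg_right (show 1+t^4 ≤ 1+M^4 by nlinarith) (le_of_lt (by positivity : (0:ℝ) < (k:ℝ)^2))])
  refine step2.trans ?_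
  rw [div_pow, div_le_iff₀ (by positivity)]
  have expand : ((1 + 2 * t ^ 4 + t ^ 8) * x ^ 4 + ((2 * t ^ 4 - 2) / (k : ℝ) ^ 2) * x ^ 2
      + 1 / (k : ℝ) ^ 4) * ((1+t^4)*(k:ℝ)^2)^2
      = ((1+t^4)^2*x^2*(k:ℝ)^2 + (t^4-1))^2 + 4*t^4 := by
    field_simp
    ring
  rw [expand]
  nlinarith [sq_nonneg ((1+t^4)^2*x^2*(k:ℝ)^2 + (t^4-1))]

theorem stmt4 :
    (∀ (k : ℕ), 0 < k → ∀ (x t : ℝ),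
      (‖gfk k x t‖) ^ 2 =
        (1 + 2 * t ^ 4 + t ^ 8) * x ^ 4 + ((2 * t ^ 4 - 2) / (k : ℝ) ^ 2) * x ^ 2
          + 1 / (k : ℝ) ^ 4) ∧
    (∀ (M δ : ℝ), 0 < δ → δ ≤ M →
      ∃ C : ℝ, 0 < C ∧ ∀ (k : ℕ), 0 < k → ∀ (x t : ℝ),
        δ ≤ |t| → |t| ≤ M → C / (k : ℝ) ^ 2 ≤ ‖gfk k x t‖) := by
  refine ⟨gfk_abs_sq, fun M δ hδ hM => ?_⟩
  have hM4 : (0:ℝ) < 1 + M^4 := by nlinarith [pow_pos (hδ.trans_le hM) 4]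
  refine ⟨2*δ^2/(1+M^4), by positivity, fun k hk x t h1 h2 => ?_⟩
  have hk' : (0:ℝ) < (k : ℝ) := Nat.cast_pos.2 hk
  apply le_of_pow_le_pow_left₀ (n := 2) two_ne_zero (norm_nonneg _)
  rw [gfk_abs_sq k hk x t, div_pow] at *
  have := gfk_lower_sq M δ hδ hM k hk x t h1 h2
  rw [div_pow] at this
  exact this
end

section
/- Let g: ℝ → ℂ be a polynomial function with deg g ≤ 2 (so that g''' = 0), and suppose g is nonvanishing on an open interval I with g(I) avoiding the branch cut of the principal square root. Then for every positive integer n, the n-th derivative of W = g^{1/2} on I satisfies D^n W = Σ_{j=0}^{⌊n/2⌋} A_j · g^{1/2 − n + j} · (Dg)^{n−2j} · (D²g)^j, where the constants A_j depend only on n and j (not on g). -/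
open Set Complex
open scoped BigOperators ContDiff

private lemma hasDerivAt_pow_comp5 {f : ℝ → ℂ} {f' : ℂ} {x : ℝ} (hf : HasDerivAt f f' x)
    (m : ℕ) : HasDerivAt (fun y => f y ^ m) ((m : ℂ) * f x ^ (m - 1) * f') x := by
  have houter := hasDerivAt_pow m (f x)
  have hcomp := (houter.hasFDerivAt.restrictScalars ℝ).comp_hasDerivAt x hf
  simpa [Function.comp_def, mul_comm, mul_assoc] using hcomp

private lemma aux5 (n : ℕ) :
    ∃ A : ℕ → ℂ, (∀ j, n < 2 * j → A j = 0) ∧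
      ∀ (g : ℝ → ℂ) (I : Set ℝ), IsOpen I →
        ContDiff ℝ ⊤ g →
        (∀ x, deriv (deriv (deriv g)) x = 0) →
        (∀ x ∈ I, g x ∈ Complex.slitPlane) →
        ∀ x ∈ I,
          iteratedDerivWithin n (fun y => g y ^ ((1:ℂ)/2)) I x
            = ∑ j ∈ Finset.range (n + 1),
                A j * g x ^ ((1:ℂ)/2 - (n : ℂ) + (j : ℂ))
                  * (deriv g x) ^ (n - 2 * j) * (deriv (deriv g) x) ^ j := by
  induction n with
  | zero =>
    refine ⟨fun j => if j = 0 then 1 else 0, fun j hj => by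
      simp [show j ≠ 0 by omega], ?_⟩
    intro g I hI hg h3 hs x hx
    simp [iteratedDerivWithin_zero]
  | succ n IH =>
    obtain ⟨A, hA0, hA⟩ := IH
    refine ⟨fun k => A k * ((1:ℂ)/2 - (n : ℂ) + (k : ℂ))
        + (if k = 0 then 0 else A (k - 1) * ((n - 2 * (k - 1) : ℕ) : ℂ)), ?_, ?_⟩
    · intro j hj
      have h1 : A j = 0 := hA0 j (by omega)
      rcases Nat.eq_zero_or_pos j with rfl | hjpos
      · omega
      · have : j ≠ 0 := by omega
        simp only [h1, this, if_neg, ite_false, zero_mul, zero_add]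
        rcases lt_or_ge n (2 * (j - 1)) with h | h
        · rw [hA0 _ h]; ring
        · have : n - 2 * (j - 1) = 0 := by omega
          rw [this]; simp
    · intro g I hI hg h3 hs x hx
      -- differentiability facts
      have hdg : Differentiable ℝ (deriv g) := by
        have h := ((hg.of_le le_top : ContDiff ℝ ∞ g).iterate_deriv 1).differentiable
          (by simp)
        simpa using h
      have hddg : Differentiable ℝ (deriv (deriv g)) := by
        have h := ((hg.of_le le_top : ContDiff ℝ ∞ g).iterate_deriv 2).differentiable
          (by simp)
        simpa [Function.iterate_succ, Function.comp] using h
      have hg1 : HasDerivAt g (deriv g x) x :=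
        ((hg.differentiable (by simp)) x).hasDerivAt
      have hg2 : HasDerivAt (deriv g) (deriv (deriv g) x) x := (hdg x).hasDerivAt
      have hg3 : HasDerivAt (deriv (deriv g)) 0 x := by
        have h := (hddg x).hasDerivAt
        rwa [h3 x] at h
      -- rewrite the (n+1)-st derivative as deriv of the n-th
      rw [iteratedDerivWithin_succ, derivWithin_of_isOpen hI hx]
      set P := deriv g x with hP
      set Q := deriv (deriv g) x with hQ
      have hEq : iteratedDerivWithin n (fun y => g y ^ ((1:ℂ)/2)) I
          =ᶠ[nhds x] (fun y => ∑ j ∈ Finset.range (n + 1),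
              A j * g y ^ ((1:ℂ)/2 - (n : ℂ) + (j : ℂ))
                * (deriv g y) ^ (n - 2 * j) * (deriv (deriv g) y) ^ j) := by
        filter_upwards [hI.mem_nhds hx] with y hy
        exact hA g I hI hg h3 hs y hy
      rw [hEq.deriv_eq]
      -- the derivative of each term
      have hD : HasDerivAt (fun y => ∑ j ∈ Finset.range (n + 1),
          A j * g y ^ ((1:ℂ)/2 - (n : ℂ) + (j : ℂ))
            * (deriv g y) ^ (n - 2 * j) * (deriv (deriv g) y) ^ j)
          (∑ j ∈ Finset.range (n + 1),
            (A j * (((1:ℂ)/2 - (n : ℂ) + (j : ℂ)) * g x ^ ((1:ℂ)/2 - (n : ℂ) + (j : ℂ) - 1))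
              * P ^ (n - 2 * j + 1) * Q ^ j
            + A j * g x ^ ((1:ℂ)/2 - (n : ℂ) + (j : ℂ)) * ((n - 2 * j : ℕ) : ℂ)
              * P ^ (n - 2 * j - 1) * Q ^ (j + 1))) x := by
        have hterm : ∀ j : ℕ, HasDerivAt (fun y =>
            A j * g y ^ ((1:ℂ)/2 - (n : ℂ) + (j : ℂ))
              * (deriv g y) ^ (n - 2 * j) * (deriv (deriv g) y) ^ j)
            (A j * (((1:ℂ)/2 - (n : ℂ) + (j : ℂ)) * g x ^ ((1:ℂ)/2 - (n : ℂ) + (j : ℂ) - 1))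
              * P ^ (n - 2 * j + 1) * Q ^ j
            + A j * g x ^ ((1:ℂ)/2 - (n : ℂ) + (j : ℂ)) * ((n - 2 * j : ℕ) : ℂ)
              * P ^ (n - 2 * j - 1) * Q ^ (j + 1)) x := by
          intro j
          have houter := (Complex.hasStrictDerivAt_cpow_const
            (c := (1:ℂ)/2 - (n : ℂ) + (j : ℂ)) (hs x hx)).hasDerivAt
          have h1 : HasDerivAt (fun y => g y ^ ((1:ℂ)/2 - (n : ℂ) + (j : ℂ)))
              (((1:ℂ)/2 - (n : ℂ) + (j : ℂ)) * g x ^ ((1:ℂ)/2 - (n : ℂ) + (j : ℂ) - 1) * P) x := by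
            have hcomp := (houter.hasFDerivAt.restrictScalars ℝ).comp_hasDerivAt x hg1
            simpa [Function.comp_def, mul_comm, mul_assoc] using hcomp
          have h2 := hasDerivAt_pow_comp5 hg2 (n - 2 * j)
          have h4 := hasDerivAt_pow_comp5 hg3 j
          have hprod := (((h1.const_mul (A j)).mul h2).mul h4)
          refine hprod.congr_deriv ?_
          rw [pow_succ, pow_succ]
          ring
        exact HasDerivAt.fun_sum fun j _ => hterm j
      rw [hD.deriv]
      -- now pure algebra: reorganize the sum
      rw [Finset.sum_add_distrib]
      have hS1 : ∑ j ∈ Finset.range (n + 1),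
          A j * (((1:ℂ)/2 - (n : ℂ) + (j : ℂ)) * g x ^ ((1:ℂ)/2 - (n : ℂ) + (j : ℂ) - 1))
            * P ^ (n - 2 * j + 1) * Q ^ j
          = ∑ k ∈ Finset.range (n + 1 + 1),
              (A k * ((1:ℂ)/2 - (n : ℂ) + (k : ℂ)))
                * g x ^ ((1:ℂ)/2 - ((n + 1 : ℕ) : ℂ) + (k : ℂ))
                * P ^ (n + 1 - 2 * k) * Q ^ k := by
        conv_rhs => rw [Finset.sum_range_succ]
        rw [hA0 (n + 1) (by omega)]
        simp only [zero_mul, add_zero]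
        refine Finset.sum_congr rfl fun j hj => ?_
        rcases le_or_gt (2 * j) n with h | h
        · rw [show (1:ℂ)/2 - (n : ℂ) + (j : ℂ) - 1
              = (1:ℂ)/2 - ((n + 1 : ℕ) : ℂ) + (j : ℂ) by push_cast; ring,
            show n - 2 * j + 1 = n + 1 - 2 * j by omega]
          ring
        · rw [hA0 j (by omega)]; ring
      have hS2 : ∑ j ∈ Finset.range (n + 1),
          A j * g x ^ ((1:ℂ)/2 - (n : ℂ) + (j : ℂ)) * ((n - 2 * j : ℕ) : ℂ)
            * P ^ (n - 2 * j - 1) * Q ^ (j + 1)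
          = ∑ k ∈ Finset.range (n + 1 + 1),
              (if k = 0 then 0 else A (k - 1) * ((n - 2 * (k - 1) : ℕ) : ℂ))
                * g x ^ ((1:ℂ)/2 - ((n + 1 : ℕ) : ℂ) + (k : ℂ))
                * P ^ (n + 1 - 2 * k) * Q ^ k := by
        rw [Finset.sum_range_succ' (fun k =>
          (if k = 0 then 0 else A (k - 1) * ((n - 2 * (k - 1) : ℕ) : ℂ))
            * g x ^ ((1:ℂ)/2 - ((n + 1 : ℕ) : ℂ) + (k : ℂ))
            * P ^ (n + 1 - 2 * k) * Q ^ k) (n + 1)]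
        norm_num [Nat.add_sub_cancel]
        refine Finset.sum_congr rfl fun j hj => ?_
        rcases lt_or_ge (2 * j) n with h | h
        · rw [show (1:ℂ)/2 - (n : ℂ) + (j : ℂ)
              = (1:ℂ)/2 - ((n + 1 : ℕ) : ℂ) + ((j + 1 : ℕ) : ℂ) by push_cast; ring,
            show n - 2 * j - 1 = n + 1 - 2 * (j + 1) by omega]
          push_cast
          ring
        · rw [show n - 2 * j = 0 by omega]
          simp
      rw [hS1, hS2, ← Finset.sum_add_distrib]
      refine Finset.sum_congr rfl fun k _ => ?_
      ring

theorem stmt5 (n : ℕ) (hn : 0 < n) :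
    ∃ A : ℕ → ℂ,
      ∀ (g : ℝ → ℂ) (I : Set ℝ), IsOpen I →
        ContDiff ℝ ⊤ g →
        (∀ x, deriv (deriv (deriv g)) x = 0) →
        (∀ x ∈ I, g x ∈ Complex.slitPlane) →
        ∀ x ∈ I,
          iteratedDerivWithin n (fun y => g y ^ ((1:ℂ)/2)) I x
            = ∑ j ∈ Finset.range (n / 2 + 1),
                A j * g x ^ ((1:ℂ)/2 - (n : ℂ) + (j : ℂ))
                  * (deriv g x) ^ (n - 2 * j) * (deriv (deriv g) x) ^ j := by
  obtain ⟨A, hA0, hA⟩ := aux5 n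
  refine ⟨A, fun g I hI hg h3 hs x hx => ?_⟩
  rw [hA g I hI hg h3 hs x hx]
  refine (Finset.sum_subset (Finset.range_subset_range.mpr (by omega)) fun j hj hj' => ?_).symm
  rw [hA0 j (by simp only [Finset.mem_range] at hj hj'; omega)]
  ring
end

section
/- Let W_k(x) = (x² − 1/k²)^{1/2} for x ∈ ℝ (principal branch of the square root), and let h(x) = Σ_{k=1}^∞ 3^{−k} W_k(x). Then h is continuous on ℝ, h is even (h(x) = h(−x)), and h is not C¹ on any neighborhood of the origin. -/
open Complex Set

/-- `W_k(x) = (x² − 1/k²)^{1/2}`, principal branch. -/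
noncomputable def Wfun (k : ℕ) (x : ℝ) : ℂ :=
  ((x : ℂ) ^ 2 - 1 / (k : ℂ) ^ 2) ^ ((1:ℂ)/2)

/-- `h(x) = Σ_{k≥1} 3^{−k} W_k(x)`. -/
noncomputable def hfun (x : ℝ) : ℂ :=
  ∑' k : ℕ, ((3 : ℂ) ^ (k + 1 : ℕ))⁻¹ * Wfun (k + 1) x



lemma cpow_half (t : ℝ) :
    (t : ℂ) ^ ((1:ℂ)/2) = (Real.sqrt t : ℂ) + (Real.sqrt (-t) : ℂ) * I := by
  have hw : ((1:ℂ)/2) = (((1:ℝ)/2 : ℝ) : ℂ) := by push_cast; ring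
  rcases lt_trichotomy t 0 with ht | rfl | ht
  · rw [ofReal_cpow_of_nonpos ht.le]
    have h1 : (-(t:ℂ)) = ((-t : ℝ) : ℂ) := by push_cast; ring
    rw [h1, hw, ← ofReal_cpow (by linarith) ((1:ℝ)/2)]
    have h2 : (Real.pi:ℂ) * I * (((1:ℝ)/2 : ℝ) : ℂ) = ((Real.pi/2 : ℝ) : ℂ) * I := by push_cast; ring
    rw [h2, exp_mul_I]
    simp [← ofReal_cos, ← ofReal_sin, Real.cos_pi_div_two, Real.sin_pi_div_two,
      Real.sqrt_eq_zero_of_nonpos ht.le, Real.sqrt_eq_rpow]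
  · simp [zero_cpow (by norm_num : (1:ℂ)/2 ≠ 0)]
  · rw [hw, ← ofReal_cpow ht.le ((1:ℝ)/2)]
    simp [Real.sqrt_eq_zero_of_nonpos (by linarith : -t ≤ 0), Real.sqrt_eq_rpow]

lemma W_eq (k : ℕ) (x : ℝ) :
    Wfun k x = (Real.sqrt (x^2 - 1/(k:ℝ)^2) : ℂ) + (Real.sqrt (1/(k:ℝ)^2 - x^2) : ℂ) * I := by
  have h : ((x:ℂ) ^ 2 - 1 / (k:ℂ) ^ 2) = (((x^2 - 1/(k:ℝ)^2 : ℝ)) : ℂ) := by push_cast; ring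
  rw [Wfun, h, cpow_half]
  norm_num [neg_sub]

lemma W_cont (k : ℕ) : Continuous (Wfun k) := by
  have h : Wfun k = fun x : ℝ =>
      (Real.sqrt (x^2 - 1/(k:ℝ)^2) : ℂ) + (Real.sqrt (1/(k:ℝ)^2 - x^2) : ℂ) * I :=
    funext (W_eq k)
  rw [h]
  fun_prop

lemma W_norm (k : ℕ) (x : ℝ) : ‖Wfun k x‖ ≤ |x| + 1 := by
  have hc0 : (0:ℝ) ≤ 1/(k:ℝ)^2 := by positivity
  have hc1 : 1/(k:ℝ)^2 ≤ 1 := by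
    rcases Nat.eq_zero_or_pos k with rfl | hk
    · norm_num
    · have : (1:ℝ) ≤ (k:ℝ)^2 := by
        have : (1:ℝ) ≤ (k:ℝ) := by exact_mod_cast hk
        nlinarith
      rw [div_le_one (by linarith)]; linarith
  rw [W_eq]
  rcases le_or_gt (1/(k:ℝ)^2) (x^2) with h | h
  · rw [show Real.sqrt (1/(k:ℝ)^2 - x^2) = 0 from Real.sqrt_eq_zero_of_nonpos (by linarith)]
    simp only [ofReal_zero, zero_mul, add_zero, norm_real, Real.norm_eq_abs]
    rw [_root_.abs_of_nonneg (Real.sqrt_nonneg _)]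
    calc Real.sqrt (x^2 - 1/(k:ℝ)^2) ≤ Real.sqrt (x^2) := Real.sqrt_le_sqrt (by linarith)
    _ = |x| := Real.sqrt_sq_eq_abs x
    _ ≤ |x| + 1 := by linarith
  · rw [show Real.sqrt (x^2 - 1/(k:ℝ)^2) = 0 from Real.sqrt_eq_zero_of_nonpos (by linarith)]
    simp only [ofReal_zero, zero_add, norm_mul, norm_real, Real.norm_eq_abs, norm_I, mul_one]
    rw [_root_.abs_of_nonneg (Real.sqrt_nonneg _)]
    calc Real.sqrt (1/(k:ℝ)^2 - x^2) ≤ Real.sqrt 1 := Real.sqrt_le_sqrt (by nlinarith)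
    _ = 1 := Real.sqrt_one
    _ ≤ |x| + 1 := by have := abs_nonneg x; linarith

lemma summable_aux (A : ℝ) : Summable (fun k : ℕ => ((3:ℝ)^(k+1))⁻¹ * A) := by
  have h : Summable (fun k : ℕ => ((3:ℝ)⁻¹)^k) :=
    summable_geometric_of_lt_one (by norm_num) (by norm_num)
  have := (h.mul_right ((3:ℝ)⁻¹ * A))
  refine this.congr fun k => ?_
  rw [pow_succ, mul_inv, inv_pow]; ring

lemma coeff_norm (k : ℕ) : ‖((3 : ℂ) ^ (k + 1 : ℕ))⁻¹‖ = ((3:ℝ)^(k+1))⁻¹ := by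
  simp [norm_inv, norm_pow]

lemma term_norm (k : ℕ) (x : ℝ) :
    ‖((3 : ℂ) ^ (k + 1 : ℕ))⁻¹ * Wfun (k + 1) x‖ ≤ ((3:ℝ)^(k+1))⁻¹ * (|x| + 1) := by
  rw [norm_mul, coeff_norm]
  exact mul_le_mul_of_nonneg_left (W_norm _ _) (by positivity)

lemma summable_terms (x : ℝ) :
    Summable (fun k : ℕ => ((3 : ℂ) ^ (k + 1 : ℕ))⁻¹ * Wfun (k + 1) x) :=
  Summable.of_norm_bounded (summable_aux (|x| + 1)) (fun k => term_norm k x)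

lemma hfun_cont : Continuous hfun := by
  rw [continuous_iff_continuousAt]
  intro x₀
  have hs : ContinuousOn hfun (Metric.ball x₀ 1) := by
    apply continuousOn_tsum (u := fun k => ((3:ℝ)^(k+1))⁻¹ * (|x₀| + 2))
      (fun k => ((continuous_const.mul (W_cont (k+1))).continuousOn)) (summable_aux _)
    intro k x hx
    refine (term_norm k x).trans ?_
    have : |x| ≤ |x₀| + 1 := by
      have := Metric.mem_ball.1 hx
      rw [Real.dist_eq] at this
      cases abs_cases (x - x₀) <;> cases abs_cases x <;> cases abs_cases x₀ <;> linarith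
    exact mul_le_mul_of_nonneg_left (by linarith) (by positivity)
  exact hs.continuousAt (Metric.ball_mem_nhds x₀ one_pos)

lemma hfun_even (x : ℝ) : hfun (-x) = hfun x := by
  unfold hfun
  congr 1; funext k
  congr 1
  unfold Wfun
  rw [ofReal_neg, neg_sq]

noncomputable def Dfun (k : ℕ) (x : ℝ) : ℂ :=
  ((x / Real.sqrt (x^2 - 1/(k:ℝ)^2) : ℝ) : ℂ) +
    ((-(x / Real.sqrt (1/(k:ℝ)^2 - x^2)) : ℝ) : ℂ) * I

lemma div_aux (s x : ℝ) : 1/(2*s)*(2*x) = x/s := by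
  rcases eq_or_ne s 0 with rfl | h
  · simp
  · field_simp

lemma W_hasDerivAt (k : ℕ) (x : ℝ) (hx : x^2 ≠ 1/(k:ℝ)^2) :
    HasDerivAt (Wfun k) (Dfun k x) x := by
  set c := 1/(k:ℝ)^2 with hc
  have h1 : HasDerivAt (fun y : ℝ => y^2 - c) (2*x) x := by
    simpa using (hasDerivAt_pow 2 x).sub_const c
  have h3 : HasDerivAt (fun y : ℝ => c - y^2) (-(2*x)) x := by
    simpa using (hasDerivAt_pow 2 x).const_sub c
  have hsq : x^2 - c ≠ 0 := sub_ne_zero.2 hx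
  have hsq2 : c - x^2 ≠ 0 := sub_ne_zero.2 (Ne.symm hx)
  have h2 : HasDerivAt (fun y : ℝ => Real.sqrt (y^2 - c))
      (1/(2*Real.sqrt (x^2-c)) * (2*x)) x := (Real.hasDerivAt_sqrt hsq).comp x h1
  have h4 : HasDerivAt (fun y : ℝ => Real.sqrt (c - y^2))
      (1/(2*Real.sqrt (c-x^2)) * (-(2*x))) x := (Real.hasDerivAt_sqrt hsq2).comp x h3
  have h5 := (h2.ofReal_comp).add ((h4.ofReal_comp).mul_const I)
  have hfn : Wfun k = fun y : ℝ =>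
      ((Real.sqrt (y^2 - c) : ℝ) : ℂ) + ((Real.sqrt (c - y^2) : ℝ) : ℂ) * I :=
    funext (W_eq k)
  rw [hfn, Dfun]
  refine h5.congr_deriv (Eq.symm ?_)
  congr 1
  · exact (congrArg _ (div_aux _ _)).symm
  · rw [← div_aux (Real.sqrt (c-x^2)) x]; ring

lemma W_not_diff (n : ℕ) (hn : 1 ≤ n) : ¬ DifferentiableAt ℝ (Wfun n) (1/(n:ℝ)) := by
  intro hd
  set p := 1/(n:ℝ) with hpdef
  have hn0 : (0:ℝ) < n := by exact_mod_cast hn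
  have hp : 0 < p := by positivity
  have hpc : p^2 = 1/(n:ℝ)^2 := by rw [hpdef, div_pow, one_pow]
  obtain ⟨C, hC⟩ := hd.isBigO_sub.bound
  rw [Metric.eventually_nhds_iff] at hC
  obtain ⟨δ, hδ, hb⟩ := hC
  set C' := |C| with hC'
  set d := min (δ/2) (p/(C'^2+1)) with hddef
  have hC'2 : (0:ℝ) < C'^2 + 1 := by positivity
  have hd0 : 0 < d := lt_min (by linarith) (by positivity)
  set x := p + d with hxdef
  have hdist : dist x p < δ := by
    rw [Real.dist_eq, hxdef]
    rw [show p + d - p = d by ring, abs_of_pos hd0]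
    calc d ≤ δ/2 := min_le_left _ _
    _ < δ := by linarith
  have h1 := hb hdist
  have hW0 : Wfun n p = 0 := by
    rw [W_eq, ← hpc]
    simp
  have hWx : Wfun n x = ((Real.sqrt (x^2 - p^2) : ℝ) : ℂ) := by
    rw [W_eq, ← hpc, show Real.sqrt (p^2 - x^2) = 0 from
      Real.sqrt_eq_zero_of_nonpos (by nlinarith)]
    simp
  rw [hW0, sub_zero, hWx] at h1
  have h2 : Real.sqrt (x^2 - p^2) ≤ C' * d := by
    have : ‖((Real.sqrt (x^2 - p^2) : ℝ) : ℂ)‖ = Real.sqrt (x^2 - p^2) := by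
      rw [norm_real, Real.norm_eq_abs, _root_.abs_of_nonneg (Real.sqrt_nonneg _)]
    rw [this] at h1
    have hxp : ‖x - p‖ = d := by
      rw [Real.norm_eq_abs, hxdef, show p + d - p = d by ring, abs_of_pos hd0]
    rw [hxp] at h1
    calc Real.sqrt (x^2 - p^2) ≤ C * d := h1
    _ ≤ C' * d := mul_le_mul_of_nonneg_right (le_abs_self C) hd0.le
  have h3 : x^2 - p^2 ≤ (C' * d)^2 := by
    have hnn : 0 ≤ x^2 - p^2 := by nlinarith
    calc x^2 - p^2 = (Real.sqrt (x^2 - p^2))^2 := (Real.sq_sqrt hnn).symm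
    _ ≤ (C' * d)^2 := by
        apply pow_le_pow_left₀ (Real.sqrt_nonneg _) h2
  have h4 : d * (C'^2 + 1) ≤ p := by
    have := min_le_right (δ/2) (p/(C'^2+1))
    rw [← hddef] at this
    exact (le_div_iff₀ hC'2).1 this
  nlinarith [sq_nonneg d, mul_pos hp hd0, sq_nonneg (C'*d)]

lemma sep_right (j k : ℕ) (hj : (1:ℝ) ≤ (j:ℝ)) (hk : k < j) (b y : ℝ) (hyb : y < b)
    (hy0 : 0 < y) : (1/(j:ℝ))^2 - b^2 ≤ 1/(((k+1:ℕ)):ℝ)^2 - y^2 := by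
  have hcast : ((k+1:ℕ):ℝ) = (k:ℝ) + 1 := by push_cast; ring
  have hkj : (k:ℝ) + 1 ≤ (j:ℝ) := by exact_mod_cast hk
  have hK0 : (0:ℝ) < (k:ℝ) + 1 := by positivity
  have h1 : 1/(j:ℝ) ≤ 1/((k:ℝ)+1) := one_div_le_one_div_of_le hK0 hkj
  have h10 : 0 < 1/(j:ℝ) := by positivity
  have h2 : (1/(j:ℝ))^2 ≤ (1/((k:ℝ)+1))^2 := by nlinarith
  have h3 : y^2 < b^2 := by nlinarith
  have h5 : (1/((k:ℝ)+1))^2 = 1/((k:ℝ)+1)^2 := by rw [div_pow]; norm_num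
  rw [hcast]
  nlinarith

lemma sep_left (n k : ℕ) (hk : n ≤ k) (a y : ℝ) (hay : a < y)
    (haa : 1/((n:ℝ)+1) < a) (ha0 : 0 < a) :
    a^2 - (1/((n:ℝ)+1))^2 ≤ y^2 - 1/(((k+1:ℕ)):ℝ)^2 := by
  have hcast : ((k+1:ℕ):ℝ) = (k:ℝ) + 1 := by push_cast; ring
  have hkj : (n:ℝ) + 1 ≤ (k:ℝ) + 1 := by
    have : (n:ℝ) ≤ (k:ℝ) := by exact_mod_cast hk
    linarith
  have hn1 : (0:ℝ) < (n:ℝ) + 1 := by positivity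
  have h1 : 1/((k:ℝ)+1) ≤ 1/((n:ℝ)+1) := one_div_le_one_div_of_le hn1 hkj
  have h10 : 0 < 1/((k:ℝ)+1) := by positivity
  have h2 : (1/((k:ℝ)+1))^2 ≤ (1/((n:ℝ)+1))^2 := by nlinarith
  have h3 : a^2 < y^2 := by nlinarith
  have h5 : (1/((k:ℝ)+1))^2 = 1/((k:ℝ)+1)^2 := by rw [div_pow]; norm_num
  rw [hcast]
  nlinarith


set_option maxHeartbeats 1000000 in
lemma not_C1 (U : Set ℝ) (hU : U ∈ nhds (0:ℝ)) : ¬ ContDiffOn ℝ 1 hfun U := by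
  classical
  intro H
  obtain ⟨ε, hε, hball⟩ := Metric.mem_nhds_iff.1 hU
  obtain ⟨m, hm⟩ := exists_nat_one_div_lt hε
  set j := m + 1 with hjdef
  set n := j + 1 with hndef
  have hj1 : (1:ℝ) ≤ (j:ℝ) := by exact_mod_cast Nat.one_le_iff_ne_zero.2 (by omega)
  have hnj : (n:ℝ) = (j:ℝ) + 1 := by exact_mod_cast rfl
  have hn0 : (0:ℝ) < (n:ℝ) := by linarith
  set p := 1/(n:ℝ) with hpdef
  have hp0 : 0 < p := by positivity
  have hpε : p < ε := by
    have h1 : (m:ℝ) + 1 ≤ (n:ℝ) := by rw [hnj]; push_cast [hjdef]; linarith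
    have : p ≤ 1/((m:ℝ)+1) := by
      apply one_div_le_one_div_of_le (by positivity) h1
    linarith
  have hpU : Metric.ball p (ε - p) ⊆ U := by
    intro y hy
    apply hball
    rw [Metric.mem_ball] at *
    rw [Real.dist_eq] at *
    have := abs_lt.1 hy
    rw [abs_lt]
    constructor <;> [skip; skip] <;> rw [sub_zero] <;> cases abs_cases p <;> linarith
  have hUp : U ∈ nhds p :=
    Filter.mem_of_superset (Metric.ball_mem_nhds p (by linarith)) hpU
  have hdiff : DifferentiableAt ℝ hfun p :=
    (H.differentiableOn one_ne_zero).differentiableAt hUp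
  -- interval
  set a := (1/(n:ℝ) + 1/((n:ℝ)+1))/2 with hadef
  set b := (1/(n:ℝ) + 1/(j:ℝ))/2 with hbdef
  have hinv1 : 1/((n:ℝ)+1) < 1/(n:ℝ) := by
    apply one_div_lt_one_div_of_lt hn0; linarith
  have hinv2 : 1/(n:ℝ) < 1/(j:ℝ) := by
    apply one_div_lt_one_div_of_lt (by linarith); linarith
  have ha0 : 0 < 1/((n:ℝ)+1) := by positivity
  have hap : 1/((n:ℝ)+1) < a := by rw [hadef]; linarith
  have hpa : a < p := by rw [hadef, hpdef]; linarith
  have hpb : p < b := by rw [hbdef, hpdef]; linarith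
  have hbj : b < 1/(j:ℝ) := by rw [hbdef]; linarith
  have hb0 : 0 < b := by linarith
  set δ₁ := a^2 - (1/((n:ℝ)+1))^2 with hδ₁
  set δ₂ := (1/(j:ℝ))^2 - b^2 with hδ₂
  have hδ₁0 : 0 < δ₁ := by rw [hδ₁]; nlinarith
  have hδ₂0 : 0 < δ₂ := by rw [hδ₂]; nlinarith
  set δ := min δ₁ δ₂ with hδdef
  have hδ0 : 0 < δ := lt_min hδ₁0 hδ₂0
  set M := b / Real.sqrt δ with hMdef
  have hM0 : 0 < M := by positivity
  -- key separation
  have key : ∀ k : ℕ, k ≠ j → ∀ y ∈ Ioo a b,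
      δ ≤ y^2 - 1/(((k+1:ℕ)):ℝ)^2 ∨ δ ≤ 1/(((k+1:ℕ)):ℝ)^2 - y^2 := by
    intro k hk y hy
    obtain ⟨hy1, hy2⟩ := hy
    have hy0 : 0 < y := lt_trans (by linarith) hy1
    rcases lt_or_gt_of_ne hk with h | h
    · right
      calc δ ≤ δ₂ := min_le_right _ _
      _ ≤ 1/(((k+1:ℕ)):ℝ)^2 - y^2 := by
          rw [hδ₂]; exact sep_right j k hj1 h b y hy2 hy0
    · left
      calc δ ≤ δ₁ := min_le_left _ _
      _ ≤ y^2 - 1/(((k+1:ℕ)):ℝ)^2 := by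
          rw [hδ₁]; exact sep_left n k (by omega) a y hy1 hap (by linarith)
  -- the modified series
  set g : ℕ → ℝ → ℂ := fun k x => if k = j then 0 else ((3:ℂ)^(k+1:ℕ))⁻¹ * Wfun (k+1) x
    with hgdef
  set g' : ℕ → ℝ → ℂ := fun k x => if k = j then 0 else ((3:ℂ)^(k+1:ℕ))⁻¹ * Dfun (k+1) x
    with hg'def
  have hg : ∀ k : ℕ, ∀ y ∈ Ioo a b, HasDerivAt (g k) (g' k y) y := by
    intro k y hy
    rcases eq_or_ne k j with rfl | hk
    · simp only [hgdef, hg'def, if_pos rfl]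
      exact hasDerivAt_const y 0
    · simp only [hgdef, hg'def, if_neg hk]
      have hne : y^2 ≠ 1/(((k+1:ℕ)):ℝ)^2 := by
        rcases key k hk y hy with h | h <;> intro hcon <;> rw [hcon] at h <;> simp at h <;>
          linarith
      exact (W_hasDerivAt (k+1) y hne).const_mul _
  have hg' : ∀ k : ℕ, ∀ y ∈ Ioo a b, ‖g' k y‖ ≤ ((3:ℝ)^(k+1))⁻¹ * M := by
    intro k y hy
    rcases eq_or_ne k j with rfl | hk
    · simp only [hg'def, if_pos rfl, norm_zero]
      positivity
    · simp only [hg'def, if_neg hk]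
      rw [norm_mul, coeff_norm]
      apply mul_le_mul_of_nonneg_left _ (by positivity)
      obtain ⟨hy1, hy2⟩ := hy
      have hy0 : 0 < y := lt_trans (by linarith) hy1
      have hsδ : Real.sqrt δ ≤ Real.sqrt (δ) := le_rfl
      have hDb : ∀ s : ℝ, δ ≤ s → |y / Real.sqrt s| ≤ M := by
        intro s hs
        rw [hMdef, abs_div, abs_of_pos hy0, _root_.abs_of_nonneg (Real.sqrt_nonneg _)]
        apply div_le_div₀ (le_of_lt hb0) (le_of_lt hy2) (by positivity)
          (Real.sqrt_le_sqrt hs)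
      rcases key k hk y ⟨hy1, hy2⟩ with h | h
      · -- x² - c ≥ δ, second component vanishes
        rw [Dfun, show Real.sqrt (1/(((k+1:ℕ)):ℝ)^2 - y^2) = 0 from
          Real.sqrt_eq_zero_of_nonpos (by linarith)]
        simp only [div_zero, neg_zero, ofReal_zero, zero_mul, add_zero, norm_real,
          Real.norm_eq_abs]
        exact hDb _ h
      · rw [Dfun, show Real.sqrt (y^2 - 1/(((k+1:ℕ)):ℝ)^2) = 0 from
          Real.sqrt_eq_zero_of_nonpos (by linarith)]
        simp only [div_zero, ofReal_zero, zero_add, norm_mul, norm_real, Real.norm_eq_abs,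
          norm_I, mul_one, abs_neg]
        exact hDb _ h
  have hg0 : Summable (fun k => g k p) := by
    apply Summable.of_norm_bounded (summable_aux (|p| + 1))
    intro k
    rcases eq_or_ne k j with rfl | hk
    · simp only [hgdef, if_pos rfl, norm_zero]; positivity
    · simp only [hgdef, if_neg hk]; exact term_norm k p
  have hpmem : p ∈ Ioo a b := ⟨hpa, hpb⟩
  have hrest : HasDerivAt (fun z => ∑' k, g k z) (∑' k, g' k p) p :=
    hasDerivAt_tsum_of_isPreconnected (summable_aux M) isOpen_Ioo
      (isPreconnected_Ioo) hg hg' hpmem hg0 hpmem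
  -- split identity
  have hsplit : ∀ x : ℝ, hfun x = ((3:ℂ)^(n:ℕ))⁻¹ * Wfun n x + ∑' k, g k x := by
    intro x
    have hs := summable_terms x
    rw [hfun, hs.tsum_eq_add_tsum_ite j]
  have h3n : ((3:ℂ)^(n:ℕ)) ≠ 0 := pow_ne_zero _ (by norm_num)
  have hWfn : Wfun n = fun x : ℝ => (3:ℂ)^(n:ℕ) * (hfun x - ∑' k, g k x) := by
    funext x
    rw [hsplit x, add_sub_cancel_right, mul_inv_cancel_left₀ h3n]
  have hWdiff : DifferentiableAt ℝ (Wfun n) p := by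
    rw [hWfn]
    exact (hdiff.sub hrest.differentiableAt).const_mul _
  exact W_not_diff n (by omega) hWdiff

theorem stmt6 :
    Continuous hfun ∧ (∀ x : ℝ, hfun (-x) = hfun x) ∧
    ∀ U ∈ nhds (0:ℝ), ¬ ContDiffOn ℝ 1 hfun U :=
  ⟨hfun_cont, hfun_even, fun U hU => not_C1 U hU⟩
end
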